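/- Let Ω = (0,1) with Lebesgue measure, p = 2, K = {x ∈ L²(0,1) : x ≥ 0 a.e.}, and P = {x ∈ L²(0,1) : ∫₀¹ x dμ ≤ 0}. Then x̄ = 0 is the unique point of K ∩ P; a function ζ ∈ L²(0,1) belongs to N_K(x̄) + N_P(x̄) if and only if max(ζ,0) ∈ L^∞(0,1); and consequently the closure of N_K(x̄) + N_P(x̄) is all of L²(0,1), so N_K(x̄) + N_P(x̄) is not closed. -/

import Mathlib

open MeasureTheory Filter Topology Pointwise
open scoped ENNReal Classical

noncomputable section

/-- Bouligand tangent cone of a set `C` at `x`. -/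
def bouligandTangentCone {E : Type*} [NormedAddCommGroup E] [NormedSpace ℝ E]
    (C : Set E) (x : E) : Set E :=
  {d | ∃ (xs : ℕ → E) (t : ℕ → ℝ), (∀ k, xs k ∈ C) ∧ (∀ k, 0 < t k) ∧
      Tendsto xs atTop (𝓝 x) ∧ Tendsto t atTop (𝓝 0) ∧
      Tendsto (fun k => (t k)⁻¹ • (xs k - x)) atTop (𝓝 d)}

/-- The duality pairing between `L^q(μ)` and `L^p(μ)`. -/
def pairing {Ω : Type*} [MeasurableSpace Ω] (μ : Measure Ω) {q p : ℝ≥0∞}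
    (y : Lp ℝ q μ) (x : Lp ℝ p μ) : ℝ := ∫ ω, y ω * x ω ∂μ

/-- The polar of a subset of `L^p(μ)`, taken in `L^q(μ)`. -/
def polarCone {Ω : Type*} [MeasurableSpace Ω] (μ : Measure Ω) (p q : ℝ≥0∞)
    (S : Set (Lp ℝ p μ)) : Set (Lp ℝ q μ) :=
  {y | ∀ s ∈ S, pairing μ y s ≤ 0}

/-- The normal cone: polar of the Bouligand tangent cone, taken in `L^q(μ)`. -/
def normalCone {Ω : Type*} [MeasurableSpace Ω] (μ : Measure Ω) (p q : ℝ≥0∞)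
    [Fact (1 ≤ p)] (C : Set (Lp ℝ p μ)) (x : Lp ℝ p μ) : Set (Lp ℝ q μ) :=
  polarCone μ p q (bouligandTangentCone C x)

/-- Lebesgue measure on `(0,1)`. -/
def μ01 : Measure ℝ := MeasureTheory.volume.restrict (Set.Ioo 0 1)

instance : IsFiniteMeasure μ01 := by
  constructor
  rw [μ01, Measure.restrict_apply_univ]
  simp [Real.volume_Ioo]

/-- The constant function `1` as an element of `L²(0,1)`. -/
def oneL2 : Lp ℝ 2 μ01 := (memLp_const (1 : ℝ)).toLp fun _ => (1 : ℝ)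

lemma μ01_def : μ01 = MeasureTheory.volume.restrict (Set.Ioo 0 1) := rfl

lemma oneL2_coeFn : ⇑oneL2 =ᵐ[μ01] fun _ => (1 : ℝ) := (memLp_const (1 : ℝ)).coeFn_toLp

lemma ae_le_of_memtop {f : ℝ → ℝ} (hf : MemLp f ∞ μ01) :
    ∀ᵐ ω ∂μ01, f ω ≤ (eLpNorm f ∞ μ01).toReal := by
  have h2 : eLpNorm f ∞ μ01 ≠ ∞ := hf.2.ne
  filter_upwards [ae_le_eLpNormEssSup (f := f) (μ := μ01)] with ω hω
  have h3 : (‖f ω‖₊ : ℝ≥0∞) ≤ eLpNorm f ∞ μ01 := by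
    rw [eLpNorm_exponent_top]; exact_mod_cast hω
  have := ENNReal.toReal_mono h2 h3
  simp only [ENNReal.coe_toReal, coe_nnnorm] at this
  exact le_trans (le_abs_self _) (by rwa [Real.norm_eq_abs] at this)

lemma max_aesm (ζ : Lp ℝ 2 μ01) :
    AEStronglyMeasurable (fun ω => max (ζ ω) 0) μ01 := by
  exact (Lp.aestronglyMeasurable ζ).sup aestronglyMeasurable_const

lemma char (ζ : Lp ℝ 2 μ01) :
    ζ ∈ ({ζ : Lp ℝ 2 μ01 | ∀ᵐ ω ∂μ01, ζ ω ≤ 0} +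
        {ξ : Lp ℝ 2 μ01 | ∃ α : ℝ, 0 ≤ α ∧ ξ = α • oneL2}) ↔
      MemLp (fun ω => max (ζ ω) 0) ∞ μ01 := by
  constructor
  · intro h
    rw [Set.mem_add] at h
    obtain ⟨η, hη, ξ, ⟨α, hα, rfl⟩, rfl⟩ := h
    apply memLp_top_of_bound (max_aesm _) α
    filter_upwards [Lp.coeFn_add η (α • oneL2), Lp.coeFn_smul α oneL2, oneL2_coeFn, hη]
      with ω h1 h2 h3 h4
    rw [Real.norm_eq_abs, abs_le]
    constructor
    · exact le_trans (neg_nonpos.mpr hα) (le_max_right _ _)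
    · apply max_le _ hα
      rw [h1, Pi.add_apply, h2, Pi.smul_apply, h3]
      simp only [smul_eq_mul, mul_one]
      linarith
  · intro h
    set C := (eLpNorm (fun ω => max (ζ ω) 0) ∞ μ01).toReal with hCdef
    have hC0 : 0 ≤ C := ENNReal.toReal_nonneg
    have hb := ae_le_of_memtop h
    rw [Set.mem_add]
    refine ⟨ζ - C • oneL2, ?_, C • oneL2, ⟨C, hC0, rfl⟩, by abel⟩
    simp only [Set.mem_setOf_eq]
    filter_upwards [Lp.coeFn_sub ζ (C • oneL2), Lp.coeFn_smul C oneL2, oneL2_coeFn, hb]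
      with ω h1 h2 h3 h4
    rw [h1, Pi.sub_apply, h2, Pi.smul_apply, h3]
    simp only [smul_eq_mul, mul_one]
    have := le_max_left (ζ ω) 0
    linarith

lemma simple_mem (f : Lp ℝ 2 μ01) (hf : f ∈ (Lp.simpleFunc ℝ 2 μ01 : AddSubgroup (Lp ℝ 2 μ01))) :
    MemLp (fun ω => max (f ω) 0) ∞ μ01 := by
  set g : Lp.simpleFunc ℝ 2 μ01 := ⟨f, hf⟩ with hg
  obtain ⟨Cb, hCb⟩ := (Lp.simpleFunc.toSimpleFunc g).exists_forall_norm_le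
  apply memLp_top_of_bound (max_aesm f) (max Cb 0)
  have hco : (g : Lp ℝ 2 μ01) = f := rfl
  filter_upwards [Lp.simpleFunc.toSimpleFunc_eq_toFun g] with ω hω
  rw [Real.norm_eq_abs, abs_le]
  constructor
  · have : (0:ℝ) ≤ max Cb 0 := le_max_right _ _
    have : (0:ℝ) ≤ max (f ω) 0 := le_max_right _ _
    linarith [le_max_right Cb (0:ℝ)]
  · apply max_le_max _ le_rfl
    calc f ω = Lp.simpleFunc.toSimpleFunc g ω := hω.symm
      _ ≤ ‖Lp.simpleFunc.toSimpleFunc g ω‖ := le_abs_self _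
      _ ≤ Cb := hCb ω

lemma rpow_memL2 : MemLp (fun x : ℝ => x ^ (-(4⁻¹:ℝ))) 2 μ01 := by
  have hint : IntegrableOn (fun x : ℝ => x ^ (-(4⁻¹:ℝ))) (Set.Ioo 0 1) :=
    (intervalIntegral.integrableOn_Ioo_rpow_iff one_pos).mpr (by norm_num)
  have haes : AEStronglyMeasurable (fun x : ℝ => x ^ (-(4⁻¹:ℝ))) μ01 :=
    hint.aestronglyMeasurable
  have h2 : IntegrableOn (fun x : ℝ => x ^ (-(2⁻¹:ℝ))) (Set.Ioo 0 1) :=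
    (intervalIntegral.integrableOn_Ioo_rpow_iff one_pos).mpr (by norm_num)
  have h2' : Integrable (fun x : ℝ => x ^ (-(2⁻¹:ℝ))) μ01 := h2
  refine (memLp_two_iff_integrable_sq haes).mpr (h2'.congr ?_)
  have hmm : ∀ᵐ x ∂μ01, x ∈ Set.Ioo (0:ℝ) 1 := by
    rw [μ01_def]; exact ae_restrict_mem measurableSet_Ioo
  filter_upwards [hmm] with x hx
  rw [sq, ← Real.rpow_add hx.1]
  norm_num

lemma rpow_unbounded (ζ₀ : Lp ℝ 2 μ01) (hζ : ⇑ζ₀ =ᵐ[μ01] fun x : ℝ => x ^ (-(4⁻¹:ℝ))) :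
    ¬ MemLp (fun ω => max (ζ₀ ω) 0) ∞ μ01 := by
  intro h
  set C := (eLpNorm (fun ω => max (ζ₀ ω) 0) ∞ μ01).toReal with hCdef
  have hC0 : 0 ≤ C := ENNReal.toReal_nonneg
  have hb := ae_le_of_memtop h
  have key : ∀ᵐ ω ∂μ01, (fun x : ℝ => x ^ (-(4⁻¹:ℝ))) ω ≤ C := by
    filter_upwards [hb, hζ] with ω h1 h2
    calc ω ^ (-(4⁻¹:ℝ)) = ζ₀ ω := h2.symm
      _ ≤ max (ζ₀ ω) 0 := le_max_left _ _
      _ ≤ C := h1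
  have hC1 : (0:ℝ) < C + 1 := by linarith
  set δ := min ((C+1) ^ (-(4:ℝ))) 1 with hδdef
  have hδpos : 0 < δ := lt_min (Real.rpow_pos_of_pos hC1 _) one_pos
  have hgt : ∀ ω ∈ Set.Ioo (0:ℝ) δ, ¬ ((fun x : ℝ => x ^ (-(4⁻¹:ℝ))) ω ≤ C) := by
    intro ω hω
    have hω0 : 0 < ω := hω.1
    have hωle : ω ≤ (C+1) ^ (-(4:ℝ)) := (lt_of_lt_of_le hω.2 (min_le_left _ _)).le
    have h3 := Real.rpow_le_rpow_of_nonpos hω0 hωle (by norm_num : (-(4⁻¹:ℝ)) ≤ 0)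
    have h4 : ((C+1) ^ (-(4:ℝ))) ^ (-(4⁻¹:ℝ)) = C + 1 := by
      rw [← Real.rpow_mul hC1.le]; norm_num
    rw [h4] at h3
    exact not_le.mpr (lt_of_lt_of_le (by linarith) h3)
  have h0 : μ01 {ω | ¬ (fun x : ℝ => x ^ (-(4⁻¹:ℝ))) ω ≤ C} = 0 := ae_iff.mp key
  have hz : μ01 (Set.Ioo (0:ℝ) δ) = 0 :=
    measure_mono_null (fun ω hω => hgt ω hω) h0
  have hcomp : μ01 (Set.Ioo (0:ℝ) δ) = ENNReal.ofReal δ := by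
    rw [μ01_def, Measure.restrict_apply measurableSet_Ioo,
      Set.inter_eq_self_of_subset_left (Set.Ioo_subset_Ioo_right (min_le_right _ _)),
      Real.volume_Ioo, sub_zero]
  rw [hcomp] at hz
  exact (ENNReal.ofReal_pos.mpr hδpos).ne' hz

theorem counterexample_without_slater_point
    (K P : Set (Lp ℝ 2 μ01))
    (hK : K = {x : Lp ℝ 2 μ01 | ∀ᵐ ω ∂μ01, 0 ≤ x ω})
    (hP : P = {x : Lp ℝ 2 μ01 | ∫ ω, x ω ∂μ01 ≤ 0})
    (NK NP : Set (Lp ℝ 2 μ01))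
    (hNK : NK = {ζ : Lp ℝ 2 μ01 | ∀ᵐ ω ∂μ01, ζ ω ≤ 0})
    (hNP : NP = {ξ : Lp ℝ 2 μ01 | ∃ α : ℝ, 0 ≤ α ∧ ξ = α • oneL2}) :
    K ∩ P = {0} ∧
    (∀ ζ : Lp ℝ 2 μ01, ζ ∈ NK + NP ↔ MemLp (fun ω => max (ζ ω) 0) ∞ μ01) ∧
    closure (NK + NP) = Set.univ ∧
    ¬ IsClosed (NK + NP) := by
  subst hK hP hNK hNP
  have hdense : Dense ({ζ : Lp ℝ 2 μ01 | ∀ᵐ ω ∂μ01, ζ ω ≤ 0} +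
      {ξ : Lp ℝ 2 μ01 | ∃ α : ℝ, 0 ≤ α ∧ ξ = α • oneL2}) := by
    refine Dense.mono ?_ (Lp.simpleFunc.dense (E := ℝ) (μ := μ01) ENNReal.ofNat_ne_top)
    intro f hf
    exact (char f).mpr (simple_mem f hf)
  refine ⟨?_, fun ζ => char ζ, hdense.closure_eq, ?_⟩
  · ext x
    simp only [Set.mem_inter_iff, Set.mem_setOf_eq, Set.mem_singleton_iff]
    constructor
    · rintro ⟨hx1, hx2⟩
      have hint : Integrable x μ01 := (Lp.memLp x).integrable (by norm_num)
      have h0 : ∫ ω, x ω ∂μ01 = 0 := le_antisymm hx2 (integral_nonneg_of_ae hx1)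
      have hx0 : ⇑x =ᵐ[μ01] 0 := (integral_eq_zero_iff_of_nonneg_ae hx1 hint).mp h0
      exact Lp.ext (hx0.trans (Lp.coeFn_zero ℝ 2 μ01).symm)
    · rintro rfl
      constructor
      · filter_upwards [Lp.coeFn_zero ℝ 2 μ01] with ω h
        rw [h]
        exact le_rfl
      · rw [integral_congr_ae (Lp.coeFn_zero ℝ 2 μ01)]
        simp
  · intro hcl
    have huniv := hdense.closure_eq
    rw [hcl.closure_eq] at huniv
    set ζ₀ : Lp ℝ 2 μ01 := rpow_memL2.toLp (fun x : ℝ => x ^ (-(4⁻¹:ℝ))) with hζ₀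
    have hmem0 : ζ₀ ∈ ({ζ : Lp ℝ 2 μ01 | ∀ᵐ ω ∂μ01, ζ ω ≤ 0} +
        {ξ : Lp ℝ 2 μ01 | ∃ α : ℝ, 0 ≤ α ∧ ξ = α • oneL2}) := by
      rw [huniv]; trivial
    exact rpow_unbounded ζ₀ rpow_memL2.coeFn_toLp ((char ζ₀).mp hmem0)
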